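/- Let 0 < p < 1, q = 1−p, and let r, Δ be positive integers, with n > 2r+1. Then P_p(X_0(n,r) = 1 and R ≥ Δ | σ_0 = 0) ≤ (1/Δ)·q^{−r}·(r·q^r + 1/(p·q)). -/

import Mathlib

open Finset


/-- Number of active neighbors of vertex `i` in the ring `C_n(r)`.
For `n > 2r+1` the `2r` offsets `±1, …, ±r` give pairwise distinct neighbors. -/
def activeNbrs (n r : ℕ) (σ : ZMod n → Bool) (i : ZMod n) : ℕ :=
  ∑ k ∈ Finset.Icc 1 r,
    ((if σ (i + (k : ZMod n)) then 1 else 0) + (if σ (i - (k : ZMod n)) then 1 else 0))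

/-- One synchronous step of strict majority bootstrap percolation on `C_n(r)`:
a passive vertex (degree `2r`) becomes active iff at least `r+1 = ⌈(2r+1)/2⌉`
of its neighbors are active; active vertices stay active. -/
def ringStep (n r : ℕ) (σ : ZMod n → Bool) : ZMod n → Bool :=
  fun i => σ i || decide (r + 1 ≤ activeNbrs n r σ i)

/-- The fixed point of strict MBP on `C_n(r)`; `n` monotone steps suffice to stabilize. -/
def ringFix (n r : ℕ) (σ : ZMod n → Bool) : ZMod n → Bool :=
  (ringStep n r)^[n] σ

/-- Probability of an event under i.i.d. Bernoulli(`p`) initial states. -/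
noncomputable def pr {V : Type} [Fintype V] [DecidableEq V] (p : ℝ) (S : Set (V → Bool)) : ℝ :=
  ∑ σ : V → Bool, S.indicator (fun τ => ∏ v, (if τ v then p else 1 - p)) σ

/-- Expectation of a random variable under i.i.d. Bernoulli(`p`) initial states. -/
noncomputable def expec {V : Type} [Fintype V] [DecidableEq V]
    (p : ℝ) (f : (V → Bool) → ℝ) : ℝ :=
  ∑ σ : V → Bool, f σ * ∏ v, (if σ v then p else 1 - p)

/-- `E_p[X_0(n,r)]`: probability that vertex `0` is active at the fixed point. -/
noncomputable def Ex (r : ℕ) (p : ℝ) (n : ℕ) : ℝ :=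
  if h : n = 0 then 0 else
    haveI : NeZero n := ⟨h⟩
    pr p {σ : ZMod n → Bool | ringFix n r σ 0 = true}

/-- `p_R(n,r,p)`: probability that strictly more than half of the `n` vertices are
active at the fixed point of strict MBP on `C_n(r)`. -/
noncomputable def pR (r : ℕ) (p : ℝ) (n : ℕ) : ℝ :=
  if h : n = 0 then 0 else
    haveI : NeZero n := ⟨h⟩
    pr p {σ : ZMod n → Bool |
      n < 2 * (Finset.univ.filter (fun i : ZMod n => ringFix n r σ i = true)).card}

/-- There is a wall located `ℓ` vertices to the right of vertex `0`:
`σ_ℓ = 1` and `σ_{ℓ+1} = ⋯ = σ_{ℓ+(r+1)} = 0`. -/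
def hasWallR (n r : ℕ) (σ : ZMod n → Bool) (ℓ : ℕ) : Prop :=
  σ ((ℓ : ℕ) : ZMod n) = true ∧ ∀ j ∈ Finset.Icc 1 (r + 1), σ (((ℓ + j : ℕ) : ZMod n)) = false

/-- There is a wall located `ℓ` vertices to the left of vertex `0`:
`σ_{−ℓ} = 1` and `σ_{−ℓ−1} = ⋯ = σ_{−ℓ−(r+1)} = 0`. -/
def hasWallL (n r : ℕ) (σ : ZMod n → Bool) (ℓ : ℕ) : Prop :=
  σ (-((ℓ : ℕ) : ZMod n)) = true ∧
    ∀ j ∈ Finset.Icc 1 (r + 1), σ (-(((ℓ + j : ℕ) : ZMod n))) = false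

open Classical in
/-- `R`: the smallest positive `ℓ` such that there is a wall located `ℓ` vertices to the
right of vertex `0`; equal to `n` if no such wall exists. -/
noncomputable def Rwall (n r : ℕ) (σ : ZMod n → Bool) : ℕ :=
  if h : ∃ ℓ, 0 < ℓ ∧ hasWallR n r σ ℓ then Nat.find h else n

open Classical in
/-- `L`: the smallest positive `ℓ` such that there is a wall located `ℓ` vertices to the
left of vertex `0`; equal to `n` if no such wall exists. -/
noncomputable def Lwall (n r : ℕ) (σ : ZMod n → Bool) : ℕ :=
  if h : ∃ ℓ, 0 < ℓ ∧ hasWallL n r σ ℓ then Nat.find h else n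

set_option linter.unusedSectionVars false
set_option maxHeartbeats 1000000

section Toolkit
variable {V : Type} [Fintype V] [DecidableEq V]

noncomputable def wt (p : ℝ) (σ : V → Bool) : ℝ := ∏ v, (if σ v then p else 1 - p)

noncomputable def ind (S : Set (V → Bool)) (σ : V → Bool) : ℝ :=
  S.indicator (fun _ => (1:ℝ)) σ

lemma ind_of_mem {S : Set (V → Bool)} {σ : V → Bool} (h : σ ∈ S) : ind S σ = 1 :=
  Set.indicator_of_mem h _

lemma ind_of_not_mem {S : Set (V → Bool)} {σ : V → Bool} (h : σ ∉ S) : ind S σ = 0 :=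
  Set.indicator_of_notMem h _

lemma ind_nonneg (S : Set (V → Bool)) (σ : V → Bool) : 0 ≤ ind S σ := by
  classical
  by_cases h : σ ∈ S
  · rw [ind_of_mem h]; norm_num
  · rw [ind_of_not_mem h]

lemma ind_le_one (S : Set (V → Bool)) (σ : V → Bool) : ind S σ ≤ 1 := by
  classical
  by_cases h : σ ∈ S
  · rw [ind_of_mem h]
  · rw [ind_of_not_mem h]; norm_num

lemma ind_congr {S : Set (V → Bool)} {σ τ : V → Bool} (h : σ ∈ S ↔ τ ∈ S) :
    ind S σ = ind S τ := by
  classical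
  by_cases hs : σ ∈ S
  · rw [ind_of_mem hs, ind_of_mem (h.1 hs)]
  · rw [ind_of_not_mem hs, ind_of_not_mem (fun ht => hs (h.2 ht))]

lemma wt_nonneg {p : ℝ} (h0 : 0 ≤ p) (h1 : p ≤ 1) (σ : V → Bool) : 0 ≤ wt p σ :=
  Finset.prod_nonneg fun v _ => by by_cases h : σ v <;> simp [h] <;> linarith

lemma mass_one {ι : Type} [Fintype ι] [DecidableEq ι] (p : ℝ) :
    ∑ a : ι → Bool, ∏ i, (if a i then p else 1 - p) = 1 := by
  rw [← Fintype.prod_sum (fun (_ : ι) (b : Bool) => if b then p else 1 - p)]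
  simp

lemma sum_wt_split (p : ℝ) (F : Finset V) (f g : (V → Bool) → ℝ)
    (hf : ∀ σ τ : V → Bool, (∀ v ∈ F, σ v = τ v) → f σ = f τ)
    (hg : ∀ σ τ : V → Bool, (∀ v ∉ F, σ v = τ v) → g σ = g τ) :
    ∑ σ : V → Bool, f σ * g σ * wt p σ
      = (∑ σ : V → Bool, f σ * wt p σ) * (∑ σ : V → Bool, g σ * wt p σ) := by
  classical
  set e := (Equiv.piEquivPiSubtypeProd (fun v => v ∈ F) (fun _ => Bool)).symm with he
  have key : ∀ H : (V → Bool) → ℝ, ∑ σ : V → Bool, H σ = ∑ x, H (e x) :=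
    fun H => (Equiv.sum_comp e H).symm
  have eapp : ∀ (a : {v // v ∈ F} → Bool) (b : {v // v ∉ F} → Bool) (v : V),
      e (a, b) v = if h : v ∈ F then a ⟨v, h⟩ else b ⟨v, h⟩ := by
    intro a b v
    simp [he, Equiv.piEquivPiSubtypeProd_symm_apply]
  set wA : ({v // v ∈ F} → Bool) → ℝ := fun a => ∏ i, (if a i then p else 1 - p) with hwA
  set wB : ({v // v ∉ F} → Bool) → ℝ := fun b => ∏ i, (if b i then p else 1 - p) with hwB
  have hwt : ∀ (a : {v // v ∈ F} → Bool) (b : {v // v ∉ F} → Bool),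
      wt p (e (a, b)) = wA a * wB b := by
    intro a b
    rw [wt, ← Fintype.prod_subtype_mul_prod_subtype (fun v => v ∈ F)
      (fun v => if (e (a, b)) v then p else 1 - p)]
    congr 1
    · exact Finset.prod_congr (by congr!) fun i _ => by rw [eapp, dif_pos i.2]
    · exact Finset.prod_congr (by congr!) fun i _ => by rw [eapp, dif_neg i.2]
  set fA : ({v // v ∈ F} → Bool) → ℝ := fun a => f (e (a, fun _ => false)) with hfA
  set gB : ({v // v ∉ F} → Bool) → ℝ := fun b => g (e ((fun _ => false), b)) with hgB
  have hfa : ∀ (a : {v // v ∈ F} → Bool) (b : {v // v ∉ F} → Bool),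
      f (e (a, b)) = fA a := by
    intro a b
    exact hf _ _ fun v hv => by rw [eapp, eapp, dif_pos hv, dif_pos hv]
  have hgb : ∀ (a : {v // v ∈ F} → Bool) (b : {v // v ∉ F} → Bool),
      g (e (a, b)) = gB b := by
    intro a b
    exact hg _ _ fun v hv => by rw [eapp, eapp, dif_neg hv, dif_neg hv]
  rw [key (fun σ => f σ * g σ * wt p σ), key (fun σ => f σ * wt p σ),
    key (fun σ => g σ * wt p σ)]
  rw [Fintype.sum_prod_type, Fintype.sum_prod_type, Fintype.sum_prod_type]
  have e1 : ∀ a : {v // v ∈ F} → Bool,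
      (∑ b, f (e (a, b)) * g (e (a, b)) * wt p (e (a, b)))
        = (fA a * wA a) * ∑ b, gB b * wB b := by
    intro a
    rw [Finset.mul_sum]
    exact Finset.sum_congr rfl fun b _ => by rw [hwt, hfa, hgb]; ring
  have e2 : ∀ a : {v // v ∈ F} → Bool,
      (∑ b, f (e (a, b)) * wt p (e (a, b))) = fA a * wA a := by
    intro a
    have h2 : (∑ b, f (e (a, b)) * wt p (e (a, b))) = (fA a * wA a) * ∑ b, wB b := by
      rw [Finset.mul_sum]
      exact Finset.sum_congr rfl fun b _ => by rw [hwt, hfa]; ring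
    rw [h2, hwB, mass_one, mul_one]
  have e3 : ∀ a : {v // v ∈ F} → Bool,
      (∑ b, g (e (a, b)) * wt p (e (a, b))) = wA a * ∑ b, gB b * wB b := by
    intro a
    rw [Finset.mul_sum]
    exact Finset.sum_congr rfl fun b _ => by rw [hwt, hgb]; ring
  simp only [e1, e2, e3]
  rw [← Finset.sum_mul, ← Finset.sum_mul, hwA, mass_one]
  ring

end Toolkit

section PR
variable {V : Type} [Fintype V] [DecidableEq V]

lemma pr_eq (p : ℝ) (S : Set (V → Bool)) :
    pr p S = ∑ σ : V → Bool, ind S σ * wt p σ := by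
  classical
  unfold pr
  refine Finset.sum_congr rfl fun σ _ => ?_
  by_cases h : σ ∈ S
  · rw [Set.indicator_of_mem h, ind_of_mem h, one_mul, wt]
  · rw [Set.indicator_of_notMem h, ind_of_not_mem h, zero_mul]

lemma pr_nonneg {p : ℝ} (h0 : 0 ≤ p) (h1 : p ≤ 1) (S : Set (V → Bool)) : 0 ≤ pr p S := by
  rw [pr_eq]
  exact Finset.sum_nonneg fun σ _ => mul_nonneg (ind_nonneg _ _) (wt_nonneg h0 h1 σ)

lemma pr_mono {p : ℝ} (h0 : 0 ≤ p) (h1 : p ≤ 1) {S T : Set (V → Bool)} (hST : S ⊆ T) :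
    pr p S ≤ pr p T := by
  classical
  rw [pr_eq, pr_eq]
  refine Finset.sum_le_sum fun σ _ => ?_
  refine mul_le_mul_of_nonneg_right ?_ (wt_nonneg h0 h1 σ)
  by_cases h : σ ∈ S
  · rw [ind_of_mem h, ind_of_mem (hST h)]
  · rw [ind_of_not_mem h]; exact ind_nonneg _ _

lemma pr_univ (p : ℝ) : pr p (Set.univ : Set (V → Bool)) = 1 := by
  rw [pr_eq]
  have : ∀ σ : V → Bool, ind (Set.univ : Set (V → Bool)) σ * wt p σ = wt p σ := by
    intro σ
    rw [ind_of_mem (Set.mem_univ σ), one_mul]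
  rw [Finset.sum_congr rfl fun σ _ => this σ]
  exact mass_one (ι := V) p

lemma pr_compl (p : ℝ) (S : Set (V → Bool)) : pr p Sᶜ = 1 - pr p S := by
  classical
  have h2 : pr p Sᶜ + pr p S = ∑ σ : V → Bool, wt p σ := by
    rw [pr_eq, pr_eq, ← Finset.sum_add_distrib]
    refine Finset.sum_congr rfl fun σ _ => ?_
    by_cases h : σ ∈ S
    · rw [ind_of_mem h, ind_of_not_mem (by simpa using h), one_mul, zero_mul, zero_add]
    · rw [ind_of_not_mem h, ind_of_mem (by simpa using h), one_mul, zero_mul, add_zero]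
  have h3 : (∑ σ : V → Bool, wt p σ) = 1 := by simpa [wt] using mass_one (ι := V) p
  linarith [h2, h3]

lemma pr_inter_indep (p : ℝ) (F : Finset V) (S T : Set (V → Bool))
    (hS : ∀ σ τ : V → Bool, (∀ v ∈ F, σ v = τ v) → (σ ∈ S ↔ τ ∈ S))
    (hT : ∀ σ τ : V → Bool, (∀ v ∉ F, σ v = τ v) → (σ ∈ T ↔ τ ∈ T)) :
    pr p (S ∩ T) = pr p S * pr p T := by
  classical
  rw [pr_eq, pr_eq, pr_eq]
  have := sum_wt_split p F (ind S) (ind T)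
    (fun σ τ h => ind_congr (hS σ τ h))
    (fun σ τ h => ind_congr (hT σ τ h))
  rw [← this]
  refine Finset.sum_congr rfl fun σ _ => ?_
  congr 1
  by_cases h1 : σ ∈ S <;> by_cases h2 : σ ∈ T
  · rw [ind_of_mem h1, ind_of_mem h2, ind_of_mem (Set.mem_inter h1 h2), one_mul]
  · rw [ind_of_mem h1, ind_of_not_mem h2, ind_of_not_mem (fun h => h2 h.2), one_mul]
  · rw [ind_of_not_mem h1, ind_of_not_mem (fun h => h1 h.1), zero_mul]
  · rw [ind_of_not_mem h1, ind_of_not_mem (fun h => h1 h.1), zero_mul]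

lemma sum_wt_restrict (p : ℝ) (F : Finset V) (f : (V → Bool) → ℝ)
    (hf : ∀ σ τ : V → Bool, (∀ v ∈ F, σ v = τ v) → f σ = f τ) :
    ∑ σ : V → Bool, f σ * wt p σ
      = ∑ a : {v // v ∈ F} → Bool,
          f ((Equiv.piEquivPiSubtypeProd (fun v => v ∈ F) (fun _ => Bool)).symm
              (a, fun _ => false)) * ∏ i, (if a i then p else 1 - p) := by
  classical
  set e := (Equiv.piEquivPiSubtypeProd (fun v => v ∈ F) (fun _ => Bool)).symm with he
  have key : ∀ H : (V → Bool) → ℝ, ∑ σ : V → Bool, H σ = ∑ x, H (e x) :=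
    fun H => (Equiv.sum_comp e H).symm
  have eapp : ∀ (a : {v // v ∈ F} → Bool) (b : {v // v ∉ F} → Bool) (v : V),
      e (a, b) v = if h : v ∈ F then a ⟨v, h⟩ else b ⟨v, h⟩ := by
    intro a b v
    simp [he, Equiv.piEquivPiSubtypeProd_symm_apply]
  have hwt : ∀ (a : {v // v ∈ F} → Bool) (b : {v // v ∉ F} → Bool),
      wt p (e (a, b)) = (∏ i, (if a i then p else 1 - p)) *
        ∏ i : {v // v ∉ F}, (if b i then p else 1 - p) := by
    intro a b
    rw [wt, ← Fintype.prod_subtype_mul_prod_subtype (fun v => v ∈ F)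
      (fun v => if (e (a, b)) v then p else 1 - p)]
    congr 1
    · exact Finset.prod_congr (by congr!) fun i _ => by rw [eapp, dif_pos i.2]
    · exact Finset.prod_congr (by congr!) fun i _ => by rw [eapp, dif_neg i.2]
  have hfa : ∀ (a : {v // v ∈ F} → Bool) (b : {v // v ∉ F} → Bool),
      f (e (a, b)) = f (e (a, fun _ => false)) := by
    intro a b
    exact hf _ _ fun v hv => by rw [eapp, eapp, dif_pos hv, dif_pos hv]
  rw [key (fun σ => f σ * wt p σ), Fintype.sum_prod_type]
  refine Finset.sum_congr rfl fun a _ => ?_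
  have h4 : (∑ b, f (e (a, b)) * wt p (e (a, b)))
      = (f (e (a, fun _ => false)) * ∏ i, (if a i then p else 1 - p))
          * ∑ b : {v // v ∉ F} → Bool, (∏ i, (if b i then p else 1 - p)) := by
    rw [Finset.mul_sum]
    exact Finset.sum_congr rfl fun b _ => by rw [hwt, hfa]; ring
  rw [h4, mass_one, mul_one]

lemma pr_cylinder (p : ℝ) (F : Finset V) (τ : V → Bool) :
    pr p {σ : V → Bool | ∀ v ∈ F, σ v = τ v} = ∏ v ∈ F, (if τ v then p else 1 - p) := by
  classical
  set S : Set (V → Bool) := {σ : V → Bool | ∀ v ∈ F, σ v = τ v} with hSdef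
  rw [pr_eq, sum_wt_restrict p F (ind S) (fun σ σ' h => ind_congr (by
    constructor
    · intro hs v hv; rw [← h v hv]; exact hs v hv
    · intro hs v hv; rw [h v hv]; exact hs v hv))]
  set e := (Equiv.piEquivPiSubtypeProd (fun v => v ∈ F) (fun _ => Bool)).symm with he
  have eapp : ∀ (a : {v // v ∈ F} → Bool) (b : {v // v ∉ F} → Bool) (v : V),
      e (a, b) v = if h : v ∈ F then a ⟨v, h⟩ else b ⟨v, h⟩ := by
    intro a b v
    simp [he, Equiv.piEquivPiSubtypeProd_symm_apply]
  have hcond : ∀ a : {v // v ∈ F} → Bool,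
      (e (a, fun _ => false) ∈ S) ↔ (a = fun i => τ i.1) := by
    intro a
    constructor
    · intro h
      funext i
      have := h i.1 i.2
      rwa [eapp, dif_pos i.2] at this
    · intro h v hv
      rw [eapp, dif_pos hv, h]
  have hterm : ∀ a : {v // v ∈ F} → Bool,
      ind S (e (a, fun _ => false)) * ∏ i, (if a i then p else 1 - p)
      = if a = (fun i => τ i.1) then ∏ i : {v // v ∈ F}, (if τ i.1 then p else 1 - p) else 0 := by
    intro a
    by_cases h : a = fun i => τ i.1
    · rw [ind_of_mem ((hcond a).2 h), if_pos h, one_mul]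
      exact Finset.prod_congr rfl fun i _ => by rw [h]
    · rw [ind_of_not_mem (fun hh => h ((hcond a).1 hh)), if_neg h, zero_mul]
  rw [Finset.sum_congr rfl fun a _ => hterm a, Finset.sum_ite_eq' Finset.univ]
  rw [if_pos (Finset.mem_univ _)]
  exact (Finset.prod_coe_sort F (fun v => if τ v then p else 1 - p))

lemma pr_union_bound {p : ℝ} (h0 : 0 ≤ p) (h1 : p ≤ 1) (E A₀ : Set (V → Bool))
    (s : Finset ℕ) (A : ℕ → Set (V → Bool))
    (h : ∀ σ ∈ E, σ ∈ A₀ ∨ ∃ k ∈ s, σ ∈ A k) :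
    pr p E ≤ pr p A₀ + ∑ k ∈ s, pr p (A k) := by
  classical
  rw [pr_eq]
  have hrhs : pr p A₀ + ∑ k ∈ s, pr p (A k)
      = ∑ σ : V → Bool, (ind A₀ σ * wt p σ + ∑ k ∈ s, ind (A k) σ * wt p σ) := by
    rw [Finset.sum_add_distrib, pr_eq, Finset.sum_comm]
    congr 1
    exact Finset.sum_congr rfl fun k _ => (pr_eq p (A k))
  rw [hrhs]
  refine Finset.sum_le_sum fun σ _ => ?_
  have hw := wt_nonneg h0 h1 σ
  have hterm : ∀ (B : Set (V → Bool)), (0:ℝ) ≤ ind B σ * wt p σ :=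
    fun B => mul_nonneg (ind_nonneg _ _) hw
  have hsum : (0:ℝ) ≤ ∑ k ∈ s, ind (A k) σ * wt p σ :=
    Finset.sum_nonneg fun k _ => hterm _
  by_cases hE : σ ∈ E
  · rcases h σ hE with h0' | ⟨k, hk, hAk⟩
    · rw [ind_of_mem hE, ind_of_mem h0']
      linarith
    · have hsingle := Finset.single_le_sum (f := fun k => ind (A k) σ * wt p σ)
        (fun k _ => hterm (A k)) hk
      rw [ind_of_mem hAk] at hsingle
      rw [ind_of_mem hE]
      have := hterm A₀
      linarith
  · rw [ind_of_not_mem hE, zero_mul]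
    have := hterm A₀
    linarith

end PR



section Domain
variable {n : ℕ} [NeZero n]

lemma castInj {a b : ℕ} (ha : a < n) (hb : b < n) (h : (a : ZMod n) = (b : ZMod n)) :
    a = b := by
  have := congrArg ZMod.val h
  rwa [ZMod.val_cast_of_lt ha, ZMod.val_cast_of_lt hb] at this

lemma card_image_cast (s : Finset ℕ) (hs : ∀ i ∈ s, i < n) :
    (s.image (Nat.cast : ℕ → ZMod n)).card = s.card :=
  Finset.card_image_of_injOn fun a ha b hb hab => castInj (hs a ha) (hs b hb) hab

/-- no wall at positions 1..m -/
def NW (n r m : ℕ) : Set (ZMod n → Bool) :=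
  {σ | ∀ k, 1 ≤ k → k ≤ m → ¬ hasWallR n r σ k}

def Uev (n r m : ℕ) : Set (ZMod n → Bool) :=
  {σ | σ 0 = false ∧ σ ∈ NW n r m}

noncomputable def uu (n r : ℕ) [NeZero n] (p : ℝ) (m : ℕ) : ℝ := pr p (Uev n r m)

variable {r : ℕ} {p : ℝ}

lemma Uev_zero : Uev n r 0 = {σ : ZMod n → Bool | ∀ v ∈ ({0} : Finset (ZMod n)), σ v = (fun _ => false) v} := by
  ext σ
  simp [Uev, NW]
  intro k h1 h2; omega

lemma uu_zero (hp : 0 < p) (hp1 : p < 1) : uu n r p 0 = 1 - p := by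
  rw [uu, Uev_zero, pr_cylinder]
  simp

lemma Uev_anti {m m' : ℕ} (h : m ≤ m') : Uev n r m' ⊆ Uev n r m := by
  intro σ hσ
  exact ⟨hσ.1, fun k h1 h2 => hσ.2 k h1 (le_trans h2 h)⟩

lemma uu_mono (hp : 0 < p) (hp1 : p < 1) {m m' : ℕ} (h : m ≤ m') :
    uu n r p m' ≤ uu n r p m :=
  pr_mono (le_of_lt hp) (le_of_lt hp1) (Uev_anti h)

lemma uu_nonneg (hp : 0 < p) (hp1 : p < 1) (m : ℕ) : 0 ≤ uu n r p m :=
  pr_nonneg (le_of_lt hp) (le_of_lt hp1) _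

lemma uu_le_q (hp : 0 < p) (hp1 : p < 1) (m : ℕ) : uu n r p m ≤ 1 - p := by
  have := uu_mono (n := n) (r := r) hp hp1 (Nat.zero_le m)
  rwa [uu_zero hp hp1] at this

/-- The main recursion inequality. -/
lemma uu_rec (hp : 0 < p) (hp1 : p < 1) (hr : 0 < r) (hn : 2 * r + 1 < n)
    {ℓ : ℕ} (hℓ1 : 1 ≤ ℓ) (hℓ : ℓ + r + 2 ≤ n) :
    uu n r p ℓ ≤ (1-p)^(ℓ+1) + ∑ j ∈ Finset.range (r+1),
      (if j + 1 ≤ ℓ then p * (1-p)^j * (1 - (1-p)^(r+1-j)) * uu n r p (ℓ - (j+r+2)) else 0) := by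
  classical
  have hp0 : (0:ℝ) ≤ p := le_of_lt hp
  have hp1' : p ≤ 1 := le_of_lt hp1
  have hq0 : (0:ℝ) < 1 - p := by linarith
  have hℓn : ℓ < n := by omega
  -- the events
  set Z : Set (ZMod n → Bool) :=
    {σ | ∀ v ∈ (Finset.range (ℓ+1)).image (Nat.cast : ℕ → ZMod n),
      σ v = (fun _ => false) v} with hZdef
  set C1 : ℕ → Set (ZMod n → Bool) := fun j =>
    {σ | ∀ v ∈ (Finset.Icc (ℓ-j) ℓ).image (Nat.cast : ℕ → ZMod n),
      σ v = (fun v => decide (v = (((ℓ-j : ℕ)) : ZMod n))) v} with hC1def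
  set C2 : ℕ → Set (ZMod n → Bool) := fun j =>
    {σ | ∀ v ∈ (Finset.Icc (ℓ+1) (ℓ-j+r+1)).image (Nat.cast : ℕ → ZMod n),
      σ v = (fun _ => false) v}ᶜ with hC2def
  set A : ℕ → Set (ZMod n → Bool) :=
    fun j => Uev n r (ℓ - j - (r+2)) ∩ (C1 j ∩ C2 j) with hAdef
  -- step 1 : inclusion
  have hincl : ∀ σ ∈ Uev n r ℓ, σ ∈ Z ∨
      ∃ j ∈ (Finset.range (r+1)).filter (fun j => j + 1 ≤ ℓ), σ ∈ A j := by
    rintro σ ⟨hσ0, hNW⟩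
    by_cases hall : ∀ i, i ≤ ℓ → σ ((i : ℕ) : ZMod n) = false
    · left
      intro v hv
      obtain ⟨i, hi, rfl⟩ := Finset.mem_image.1 hv
      exact hall i (by have := Finset.mem_range.1 hi; omega)
    · right
      push_neg at hall
      obtain ⟨i0, hi0ℓ, hi0⟩ := hall
      have hi0' : σ ((i0 : ℕ) : ZMod n) = true := by
        revert hi0; cases (σ ((i0 : ℕ) : ZMod n)) <;> simp
      set P : ℕ → Prop := fun i => σ ((i : ℕ) : ZMod n) = true with hPdef
      set k := Nat.findGreatest P ℓ with hkdef
      have hkP : σ ((k : ℕ) : ZMod n) = true :=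
        Nat.findGreatest_spec (P := P) hi0ℓ hi0'
      have hkℓ : k ≤ ℓ := Nat.findGreatest_le ℓ
      have hk1 : 1 ≤ k := by
        rcases Nat.eq_zero_or_pos k with h0 | h1
        · exfalso
          rw [h0] at hkP
          rw [show (((0:ℕ)) : ZMod n) = 0 by simp] at hkP
          rw [hσ0] at hkP
          exact Bool.false_ne_true hkP
        · exact h1
      have hmax : ∀ i, k < i → i ≤ ℓ → σ ((i : ℕ) : ZMod n) = false := by
        intro i h1 h2
        have h3 : ¬ P i := Nat.findGreatest_is_greatest h1 h2
        rw [hPdef] at h3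
        simpa using h3
      set j := ℓ - k with hjdef
      have hjr : j ≤ r := by
        by_contra hjr
        push_neg at hjr
        refine hNW k hk1 hkℓ ⟨hkP, fun jj hjj => ?_⟩
        have hjj' := Finset.mem_Icc.1 hjj
        exact hmax (k + jj) (by omega) (by omega)
      have hkeq : ℓ - j = k := by omega
      refine ⟨j, Finset.mem_filter.2 ⟨Finset.mem_range.2 (by omega), by omega⟩, ?_, ?_, ?_⟩
      · exact ⟨hσ0, fun k' h1 h2 => hNW k' h1 (by omega)⟩
      · intro v hv
        obtain ⟨i, hi, rfl⟩ := Finset.mem_image.1 hv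
        have hiIcc := Finset.mem_Icc.1 hi
        by_cases hik : i = ℓ - j
        · subst hik
          rw [← hkeq] at hkP
          simp [hkP]
        · have hif : σ ((i : ℕ) : ZMod n) = false := hmax i (by omega) hiIcc.2
          rw [hif]
          have hne : ((i : ℕ) : ZMod n) ≠ (((ℓ - j : ℕ)) : ZMod n) := by
            intro hcontra
            exact hik (castInj (by omega) (by omega) hcontra)
          simp [hne]
      · intro hC
        refine hNW k hk1 hkℓ ⟨hkP, fun jj hjj => ?_⟩
        have hjj' := Finset.mem_Icc.1 hjj
        by_cases hle : k + jj ≤ ℓ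
        · exact hmax (k + jj) (by omega) hle
        · have hmem : k + jj ∈ Finset.Icc (ℓ+1) (ℓ - j + r + 1) :=
            Finset.mem_Icc.2 (by omega)
          exact hC _ (Finset.mem_image_of_mem _ hmem)
  -- step 2 : union bound
  have hub := pr_union_bound hp0 hp1' (Uev n r ℓ) Z
    ((Finset.range (r+1)).filter (fun j => j + 1 ≤ ℓ)) A hincl
  -- step 3 : pr Z
  have hZ : pr p Z = (1-p)^(ℓ+1) := by
    rw [hZdef, pr_cylinder]
    rw [Finset.prod_congr rfl (fun v _ => by simp : ∀ v ∈ (Finset.range (ℓ+1)).image (Nat.cast : ℕ → ZMod n), (if (fun _ => false) v = true then p else 1 - p) = 1 - p)]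
    rw [Finset.prod_const, card_image_cast _ (fun i hi => by
      have := Finset.mem_range.1 hi; omega)]
    rw [Finset.card_range]
  -- step 4 : pr (A j)
  have hA : ∀ j, j ∈ (Finset.range (r+1)).filter (fun j => j + 1 ≤ ℓ) →
      pr p (A j) = p * (1-p)^j * (1 - (1-p)^(r+1-j)) * uu n r p (ℓ - (j+r+2)) := by
    intro j hj
    obtain ⟨hjr', hjℓ⟩ := Finset.mem_filter.1 hj
    have hjr : j ≤ r := by have := Finset.mem_range.1 hjr'; omega
    have hk1 : 1 ≤ ℓ - j := by omega
    have hkn : ℓ - j + r + 1 < n := by omega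
    -- 4a : split off Uev part
    have h4a : pr p (A j) = pr p (Uev n r (ℓ - j - (r+2))) * pr p (C1 j ∩ C2 j) := by
      rw [hAdef]
      refine pr_inter_indep p ((Finset.range (ℓ-j)).image (Nat.cast : ℕ → ZMod n)) _ _ ?_ ?_
      · -- Uev determined by coords < ℓ - j
        intro σ τ hagree
        have hag : ∀ i : ℕ, i < ℓ - j → σ ((i : ℕ) : ZMod n) = τ ((i : ℕ) : ZMod n) := by
          intro i hi
          exact hagree _ (Finset.mem_image_of_mem _ (Finset.mem_range.2 hi))
        have hwall : ∀ k', 1 ≤ k' → k' ≤ ℓ - j - (r+2) →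
            (hasWallR n r σ k' ↔ hasWallR n r τ k') := by
          intro k' h1 h2
          unfold hasWallR
          rw [hag k' (by omega)]
          have : ∀ jj ∈ Finset.Icc 1 (r+1),
              σ (((k' + jj : ℕ)) : ZMod n) = τ (((k' + jj : ℕ)) : ZMod n) := by
            intro jj hjj
            have := Finset.mem_Icc.1 hjj
            exact hag (k' + jj) (by omega)
          constructor
          · rintro ⟨w1, w2⟩
            exact ⟨w1, fun jj hjj => by rw [← this jj hjj]; exact w2 jj hjj⟩
          · rintro ⟨w1, w2⟩
            exact ⟨w1, fun jj hjj => by rw [this jj hjj]; exact w2 jj hjj⟩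
        have hag0 : σ 0 = τ 0 := by
          have := hag 0 (by omega)
          simpa using this
        constructor
        · rintro ⟨m0, mNW⟩
          exact ⟨by rw [← hag0]; exact m0,
            fun k' h1 h2 => fun hw => mNW k' h1 h2 ((hwall k' h1 h2).2 hw)⟩
        · rintro ⟨m0, mNW⟩
          exact ⟨by rw [hag0]; exact m0,
            fun k' h1 h2 => fun hw => mNW k' h1 h2 ((hwall k' h1 h2).1 hw)⟩
      · -- C1 ∩ C2 determined by coords outside
        intro σ τ hagree
        have hout : ∀ i : ℕ, ℓ - j ≤ i → i ≤ ℓ - j + r + 1 →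
            σ ((i : ℕ) : ZMod n) = τ ((i : ℕ) : ZMod n) := by
          intro i hi1 hi2
          refine hagree _ (fun hmem => ?_)
          obtain ⟨i', hi', hcast⟩ := Finset.mem_image.1 hmem
          have hi'' := Finset.mem_range.1 hi'
          have : i' = i := castInj (by omega) (by omega) hcast
          omega
        have hiff1 : σ ∈ C1 j ↔ τ ∈ C1 j := by
          rw [hC1def]
          simp only [Set.mem_setOf_eq]
          constructor <;> intro hh v hv <;>
            obtain ⟨i, hi, rfl⟩ := Finset.mem_image.1 hv <;>
            have hiIcc := Finset.mem_Icc.1 hi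
          · rw [← hout i (by omega) (by omega)]; exact hh _ (Finset.mem_image_of_mem _ hi)
          · rw [hout i (by omega) (by omega)]; exact hh _ (Finset.mem_image_of_mem _ hi)
        have hiff2 : σ ∈ C2 j ↔ τ ∈ C2 j := by
          rw [hC2def]
          simp only [Set.mem_compl_iff, Set.mem_setOf_eq]
          constructor <;> intro hh hcon <;> apply hh <;> intro v hv <;>
            obtain ⟨i, hi, rfl⟩ := Finset.mem_image.1 hv <;>
            have hiIcc := Finset.mem_Icc.1 hi
          · rw [hout i (by omega) (by omega)]; exact hcon _ (Finset.mem_image_of_mem _ hi)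
          · rw [← hout i (by omega) (by omega)]; exact hcon _ (Finset.mem_image_of_mem _ hi)
        rw [Set.mem_inter_iff, Set.mem_inter_iff, hiff1, hiff2]
    -- 4b : split C1 and C2
    have h4b : pr p (C1 j ∩ C2 j) = pr p (C1 j) * pr p (C2 j) := by
      refine pr_inter_indep p ((Finset.Icc (ℓ-j) ℓ).image (Nat.cast : ℕ → ZMod n)) _ _ ?_ ?_
      · intro σ τ hagree
        rw [hC1def]
        simp only [Set.mem_setOf_eq]
        constructor <;> intro hh v hv
        · rw [← hagree v hv]; exact hh v hv
        · rw [hagree v hv]; exact hh v hv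
      · intro σ τ hagree
        have hout : ∀ i : ℕ, ℓ + 1 ≤ i → i ≤ ℓ - j + r + 1 →
            σ ((i : ℕ) : ZMod n) = τ ((i : ℕ) : ZMod n) := by
          intro i hi1 hi2
          refine hagree _ (fun hmem => ?_)
          obtain ⟨i', hi', hcast⟩ := Finset.mem_image.1 hmem
          have hi'' := Finset.mem_Icc.1 hi'
          have : i' = i := castInj (by omega) (by omega) hcast
          omega
        rw [hC2def]
        simp only [Set.mem_compl_iff, Set.mem_setOf_eq]
        constructor <;> intro hh hcon <;> apply hh <;> intro v hv <;>
          obtain ⟨i, hi, rfl⟩ := Finset.mem_image.1 hv <;>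
          have hiIcc := Finset.mem_Icc.1 hi
        · rw [hout i (by omega) (by omega)]; exact hcon _ (Finset.mem_image_of_mem _ hi)
        · rw [← hout i (by omega) (by omega)]; exact hcon _ (Finset.mem_image_of_mem _ hi)
    -- 4c : pr C1
    have h4c : pr p (C1 j) = p * (1-p)^j := by
      rw [hC1def]
      rw [pr_cylinder]
      rw [Finset.prod_image (fun a ha b hb hab => castInj
        (by have := (Finset.mem_Icc.1 ha).2; omega)
        (by have := (Finset.mem_Icc.1 hb).2; omega) hab)]
      have hmem : ℓ - j ∈ Finset.Icc (ℓ-j) ℓ := Finset.mem_Icc.2 ⟨le_refl _, by omega⟩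
      rw [← Finset.mul_prod_erase _ _ hmem]
      have hfirst : (if (decide ((((ℓ - j : ℕ)) : ZMod n) = (((ℓ - j : ℕ)) : ZMod n)) = true) then p else 1 - p) = p := by simp
      rw [hfirst]
      congr 1
      have hrest : ∀ i ∈ (Finset.Icc (ℓ-j) ℓ).erase (ℓ-j),
          (if (decide (((i : ℕ) : ZMod n) = (((ℓ - j : ℕ)) : ZMod n)) = true) then p else 1 - p) = 1 - p := by
        intro i hi
        obtain ⟨hine, hiIcc⟩ := Finset.mem_erase.1 hi
        have hiIcc' := Finset.mem_Icc.1 hiIcc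
        have hne : ((i : ℕ) : ZMod n) ≠ (((ℓ - j : ℕ)) : ZMod n) := by
          intro hcontra
          exact hine (castInj (by omega) (by omega) hcontra)
        simp [hne]
      rw [Finset.prod_congr rfl hrest, Finset.prod_const, Finset.card_erase_of_mem hmem,
        Nat.card_Icc]
      congr 1
      omega
    -- 4d : pr C2
    have h4d : pr p (C2 j) = 1 - (1-p)^(r+1-j) := by
      rw [hC2def, pr_compl, pr_cylinder]
      have hval : ∀ v ∈ (Finset.Icc (ℓ+1) (ℓ-j+r+1)).image (Nat.cast : ℕ → ZMod n),
          (if (fun _ => false) v = true then p else 1 - p) = 1 - p := fun v _ => by simp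
      rw [Finset.prod_congr rfl hval, Finset.prod_const,
        card_image_cast _ (fun i hi => by have := Finset.mem_Icc.1 hi; omega), Nat.card_Icc]
      congr 2
      omega
    rw [h4a, h4b, h4c, h4d, uu, show ℓ - j - (r+2) = ℓ - (j+r+2) from by omega]
    ring
  -- combine
  rw [Finset.sum_congr rfl hA] at hub
  rw [hZ] at hub
  rw [uu]
  refine le_trans hub ?_
  rw [Finset.sum_filter]

lemma Rwall_le_n (hn : 0 < n) (σ : ZMod n → Bool) : Rwall n r σ ≤ n := by
  classical
  rw [Rwall]
  split
  · rename_i h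
    by_contra hgt
    push_neg at hgt
    set m := Nat.find h with hm
    have hspec := Nat.find_spec h
    have hwall : 0 < m - n ∧ hasWallR n r σ (m - n) := by
      constructor
      · omega
      · obtain ⟨h1, h2⟩ := hspec.2
        have hcast : ∀ a : ℕ, n ≤ a → ((a - n : ℕ) : ZMod n) = (a : ZMod n) := by
          intro a hna
          rw [Nat.cast_sub hna, ZMod.natCast_self, sub_zero]
        constructor
        · rw [hcast m (by omega)]; exact h1
        · intro j hj
          rw [show m - n + j = m + j - n by omega, hcast (m + j) (by omega)]
          exact h2 j hj
    exact Nat.find_min h (by omega : m - n < m) hwall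
  · exact le_refl n


lemma sum_uu (hp : 0 < p) (hp1 : p < 1) (hr : 0 < r) (hn : 2 * r + 1 < n) :
    ∑ m ∈ Finset.range (n - r - 1), uu n r p m
      ≤ ((1-p)⁻¹)^r / p - (r+1) * (1-p) := by
  classical
  set q : ℝ := 1 - p with hqdef
  have hq0 : (0:ℝ) < q := by rw [hqdef]; linarith
  have hq1 : q < 1 := by rw [hqdef]; linarith
  set L : ℕ := n - r - 2 with hLdef
  have hL1 : L + 1 = n - r - 1 := by omega
  set S : ℝ := ∑ m ∈ Finset.range (L+1), uu n r p m with hSdef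
  rw [← hL1, ← hSdef]
  have hu0 : uu n r p 0 = q := uu_zero hp hp1
  have hunn : ∀ m, 0 ≤ uu n r p m := uu_nonneg hp hp1
  set c : ℕ → ℝ := fun j => p * q^j * (1 - q^(r+1-j)) with hcdef
  have hc0 : ∀ j, 0 ≤ c j := by
    intro j
    have h2 : q ^ (r+1-j) ≤ 1 := pow_le_one₀ (le_of_lt hq0) (le_of_lt hq1)
    exact mul_nonneg (mul_nonneg (le_of_lt hp) (le_of_lt (pow_pos hq0 j))) (by linarith)
  -- step A : per-ℓ bound
  have hbound : ∀ ℓ ∈ Finset.range (L+1), uu n r p ℓ ≤ q^(ℓ+1) +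
      ∑ j ∈ Finset.range (r+1),
        (if j + 1 ≤ ℓ then c j * uu n r p (ℓ - (j+r+2)) else 0) := by
    intro ℓ hℓmem
    have hℓL : ℓ ≤ L := by have := Finset.mem_range.1 hℓmem; omega
    rcases Nat.eq_zero_or_pos ℓ with h0 | h1
    · subst h0
      have : ∑ j ∈ Finset.range (r+1),
          (if j + 1 ≤ 0 then c j * uu n r p (0 - (j+r+2)) else 0) = 0 := by
        refine Finset.sum_eq_zero fun j _ => ?_
        rw [if_neg (by omega)]
      rw [this, add_zero, pow_one, hu0]
    · have hrec := uu_rec hp hp1 hr hn h1 (by omega : ℓ + r + 2 ≤ n)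
      refine le_trans hrec ?_
      rw [hqdef]
  -- step B : sum the bounds
  have hSbound : S ≤ (∑ ℓ ∈ Finset.range (L+1), q^(ℓ+1)) +
      ∑ j ∈ Finset.range (r+1), c j *
        (∑ ℓ ∈ Finset.range (L+1), (if j + 1 ≤ ℓ then uu n r p (ℓ - (j+r+2)) else 0)) := by
    calc S ≤ ∑ ℓ ∈ Finset.range (L+1), (q^(ℓ+1) +
        ∑ j ∈ Finset.range (r+1),
          (if j + 1 ≤ ℓ then c j * uu n r p (ℓ - (j+r+2)) else 0)) :=
          Finset.sum_le_sum hbound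
    _ = (∑ ℓ ∈ Finset.range (L+1), q^(ℓ+1)) +
        ∑ ℓ ∈ Finset.range (L+1), ∑ j ∈ Finset.range (r+1),
          (if j + 1 ≤ ℓ then c j * uu n r p (ℓ - (j+r+2)) else 0) :=
          Finset.sum_add_distrib
    _ = (∑ ℓ ∈ Finset.range (L+1), q^(ℓ+1)) +
        ∑ j ∈ Finset.range (r+1), ∑ ℓ ∈ Finset.range (L+1),
          (if j + 1 ≤ ℓ then c j * uu n r p (ℓ - (j+r+2)) else 0) := by
          rw [Finset.sum_comm]
    _ = (∑ ℓ ∈ Finset.range (L+1), q^(ℓ+1)) +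
        ∑ j ∈ Finset.range (r+1), c j * ∑ ℓ ∈ Finset.range (L+1),
          (if j + 1 ≤ ℓ then uu n r p (ℓ - (j+r+2)) else 0) := by
          congr 1
          refine Finset.sum_congr rfl fun j _ => ?_
          rw [Finset.mul_sum]
          refine Finset.sum_congr rfl fun ℓ _ => ?_
          split_ifs <;> ring
  -- step C : inner sums
  have hInner : ∀ j ∈ Finset.range (r+1),
      (∑ ℓ ∈ Finset.range (L+1), (if j + 1 ≤ ℓ then uu n r p (ℓ - (j+r+2)) else 0))
        ≤ (r+1) * q + S := by
    intro j hj
    have hjr : j ≤ r := by have := Finset.mem_range.1 hj; omega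
    have hjL : j ≤ L := by omega
    have step1 : (∑ ℓ ∈ Finset.range (L+1), (if j + 1 ≤ ℓ then uu n r p (ℓ - (j+r+2)) else 0))
        = ∑ ℓ ∈ Finset.Ico (j+1) (L+1), uu n r p (ℓ - (j+r+2)) := by
      rw [← Finset.sum_filter]
      congr 1
      ext ℓ
      simp [Finset.mem_filter, Finset.mem_Ico, Finset.mem_range]
      omega
    rw [step1]
    -- split at j+r+3
    have hsplit : ∑ ℓ ∈ Finset.Ico (j+1) (L+1), uu n r p (ℓ - (j+r+2))
        = (∑ ℓ ∈ Finset.Ico (j+1) (min (j+r+3) (L+1)), uu n r p (ℓ - (j+r+2)))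
          + ∑ ℓ ∈ Finset.Ico (min (j+r+3) (L+1)) (L+1), uu n r p (ℓ - (j+r+2)) := by
      rw [Finset.sum_Ico_consecutive]
      · omega
      · exact min_le_right _ _
    rw [hsplit]
    have hpart1 : (∑ ℓ ∈ Finset.Ico (j+1) (min (j+r+3) (L+1)), uu n r p (ℓ - (j+r+2)))
        ≤ (r+2) * q := by
      have heach : ∀ ℓ ∈ Finset.Ico (j+1) (min (j+r+3) (L+1)), uu n r p (ℓ - (j+r+2)) = q := by
        intro ℓ hℓ
        have := Finset.mem_Ico.1 hℓ
        rw [show ℓ - (j+r+2) = 0 by omega, hu0]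
      rw [Finset.sum_congr rfl heach, Finset.sum_const, Nat.card_Ico, nsmul_eq_mul]
      have hcard : ((min (j+r+3) (L+1)) - (j+1) : ℕ) ≤ r + 2 := by omega
      calc (((min (j+r+3) (L+1)) - (j+1) : ℕ) : ℝ) * q ≤ (r+2 : ℝ) * q := by
            refine mul_le_mul_of_nonneg_right ?_ (le_of_lt hq0)
            exact_mod_cast hcard
        _ = (r+2) * q := by norm_num
    have hpart2 : (∑ ℓ ∈ Finset.Ico (min (j+r+3) (L+1)) (L+1), uu n r p (ℓ - (j+r+2)))
        ≤ S - q := by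
      rcases le_or_gt (j+r+3) (L+1) with hcase | hcase
      · rw [min_eq_left hcase]
        rw [Finset.sum_Ico_eq_sum_range]
        have heach : ∀ i ∈ Finset.range (L+1-(j+r+3)),
            uu n r p (j+r+3+i - (j+r+2)) = uu n r p (i+1) := by
          intro i _
          congr 1
          omega
        rw [Finset.sum_congr rfl heach]
        have hsub : ∑ i ∈ Finset.range (L+1-(j+r+3)), uu n r p (i+1)
            ≤ ∑ i ∈ Finset.range L, uu n r p (i+1) := by
          refine Finset.sum_le_sum_of_subset_of_nonneg ?_ (fun i _ _ => hunn _)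
          refine Finset.range_subset_range.2 (by omega)
        refine le_trans hsub ?_
        have : ∑ i ∈ Finset.range (L+1), uu n r p i
            = (∑ i ∈ Finset.range L, uu n r p (i+1)) + uu n r p 0 :=
          Finset.sum_range_succ' _ _
        rw [hSdef, this, hu0]
        linarith
      · rw [min_eq_right (le_of_lt hcase)]
        rw [Finset.Ico_self, Finset.sum_empty]
        have hSq : q ≤ S := by
          rw [hSdef]
          calc q = uu n r p 0 := hu0.symm
            _ ≤ ∑ i ∈ Finset.range (L+1), uu n r p i := by
              refine Finset.single_le_sum (fun i _ => hunn i) ?_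
              exact Finset.mem_range.2 (by omega)
        linarith
    linarith
  -- step D : geometric facts
  have hgeom : ∀ m : ℕ, (∑ i ∈ Finset.range m, q^i) * p = 1 - q^m := by
    intro m
    have := geom_sum_mul q m
    have hqp : q - 1 = -p := by rw [hqdef]; ring
    calc (∑ i ∈ Finset.range m, q^i) * p = -((∑ i ∈ Finset.range m, q^i) * (q-1)) := by
          rw [hqp]; ring
      _ = -(q^m - 1) := by rw [this]
      _ = 1 - q^m := by ring
  have hG : (∑ ℓ ∈ Finset.range (L+1), q^(ℓ+1)) ≤ q / p := by
    have h1 : (∑ ℓ ∈ Finset.range (L+1), q^(ℓ+1)) = q * ∑ ℓ ∈ Finset.range (L+1), q^ℓ := by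
      rw [Finset.mul_sum]
      exact Finset.sum_congr rfl fun ℓ _ => by ring
    have h2 : (∑ ℓ ∈ Finset.range (L+1), q^ℓ) = (1 - q^(L+1)) / p := by
      rw [eq_div_iff (ne_of_gt hp)]
      exact hgeom (L+1)
    rw [h1, h2]
    have h3 : (0:ℝ) < q^(L+1) := pow_pos hq0 _
    have h4 : (1 - q^(L+1)) / p ≤ 1 / p := by
      gcongr
      nlinarith [h3]
    calc q * ((1 - q^(L+1)) / p) ≤ q * (1/p) :=
        mul_le_mul_of_nonneg_left h4 (le_of_lt hq0)
      _ = q / p := by ring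
  have hcsum : (∑ j ∈ Finset.range (r+1), c j)
      = 1 - q^(r+1) - (r+1) * p * q^(r+1) := by
    have heach : ∀ j ∈ Finset.range (r+1), c j = p * q^j - p * q^(r+1) := by
      intro j hj
      have hjr : j ≤ r := by have := Finset.mem_range.1 hj; omega
      have hqq : q^j * q^(r+1-j) = q^(r+1) := by
        rw [← pow_add]
        congr 1
        omega
      rw [hcdef]
      calc p * q^j * (1 - q^(r+1-j)) = p * q^j - p * (q^j * q^(r+1-j)) := by ring
        _ = p * q^j - p * q^(r+1) := by rw [hqq]
    rw [Finset.sum_congr rfl heach, Finset.sum_sub_distrib, Finset.sum_const,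
      ← Finset.mul_sum, Finset.card_range, nsmul_eq_mul]
    have := hgeom (r+1)
    push_cast
    nlinarith [hgeom (r+1)]
  -- step E : final algebra
  have hkey : S ≤ (∑ ℓ ∈ Finset.range (L+1), q^(ℓ+1)) +
      (∑ j ∈ Finset.range (r+1), c j) * ((r+1) * q + S) := by
    refine le_trans hSbound ?_
    have : ∑ j ∈ Finset.range (r+1), c j *
        (∑ ℓ ∈ Finset.range (L+1), (if j + 1 ≤ ℓ then uu n r p (ℓ - (j+r+2)) else 0))
        ≤ ∑ j ∈ Finset.range (r+1), c j * ((r+1) * q + S) := by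
      refine Finset.sum_le_sum fun j hj => ?_
      exact mul_le_mul_of_nonneg_left (hInner j hj) (hc0 j)
    rw [← Finset.sum_mul] at this
    linarith
  set D : ℝ := q^(r+1) * (1 + (r+1) * p) with hDdef
  have hD0 : 0 < D := by
    rw [hDdef]
    have : (0:ℝ) < 1 + (r+1)*p := by positivity
    exact mul_pos (pow_pos hq0 _) this
  have hcsum' : (∑ j ∈ Finset.range (r+1), c j) = 1 - D := by
    rw [hcsum, hDdef]; ring
  rw [hcsum'] at hkey
  -- S * D ≤ q/p + (1-D)*(r+1)*q
  have hSD : S * D ≤ q / p + (1 - D) * ((r+1) * q) := by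
    calc S * D = S - (1 - D) * S := by ring
      _ ≤ ((∑ ℓ ∈ Finset.range (L+1), q^(ℓ+1)) + (1 - D) * ((r+1) * q + S))
            - (1 - D) * S := sub_le_sub_right hkey _
      _ = (∑ ℓ ∈ Finset.range (L+1), q^(ℓ+1)) + (1 - D) * ((r+1) * q) := by ring
      _ ≤ q / p + (1 - D) * ((r+1) * q) := add_le_add_left hG _
  set X : ℝ := (q⁻¹)^r / p - (r+1) * q with hXdef
  have hXD : X * D = q / p + (1 - D) * ((r+1) * q) := by
    rw [hXdef, hDdef]
    have hqr : (q⁻¹)^r * q^(r+1) = q := by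
      rw [inv_pow, pow_succ]
      have h1 : (q^r)⁻¹ * (q^r * q) = q := by
        rw [← mul_assoc, inv_mul_cancel₀ (ne_of_gt (pow_pos hq0 r)), one_mul]
      exact h1
    field_simp
    have hqq : q^r * q⁻¹^r = 1 := by rw [← mul_pow, mul_inv_cancel₀ hq0.ne', one_pow]
    linear_combination (q * (1 + p + p * r)) * hqq
  have : S * D ≤ X * D := by rw [hXD]; exact hSD
  have hfin : S ≤ X := le_of_mul_le_mul_right this hD0
  rw [hXdef, hqdef] at hfin
  exact hfin

end Domain

section Final
variable {n : ℕ} [NeZero n]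

lemma pr_empty (p : ℝ) : pr (V := ZMod n) p (∅ : Set (ZMod n → Bool)) = 0 := by
  rw [pr_eq]
  refine Finset.sum_eq_zero fun σ _ => ?_
  rw [ind_of_not_mem (Set.notMem_empty σ), zero_mul]

lemma Ewall_subset {r Δ : ℕ} {ℓ : ℕ} (hℓΔ : ℓ < Δ) :
    {σ : ZMod n → Bool | Δ ≤ Rwall n r σ ∧ σ 0 = false} ⊆ Uev n r ℓ := by
  classical
  rintro σ ⟨hR, h0⟩
  refine ⟨h0, fun k hk1 hk2 hw => ?_⟩
  have hex : ∃ m, 0 < m ∧ hasWallR n r σ m := ⟨k, hk1, hw⟩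
  have hle : Rwall n r σ ≤ k := by
    rw [Rwall, dif_pos hex]
    exact Nat.find_le ⟨hk1, hw⟩
  omega

lemma pr_sigma0 (p : ℝ) (hp : 0 < p) (hp1 : p < 1) :
    pr p {σ : ZMod n → Bool | σ 0 = false} = 1 - p := by
  have h : {σ : ZMod n → Bool | σ 0 = false}
      = {σ : ZMod n → Bool | ∀ v ∈ ({0} : Finset (ZMod n)), σ v = (fun _ => false) v} := by
    ext σ; simp
  rw [h, pr_cylinder]
  simp

end Final


/-- `P_p(X_0(n,r) = 1, R ≥ Δ | σ_0 = 0) ≤ (1/Δ)·q^{−r}·(r·q^r + 1/(pq))` where `q = 1−p`.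
The conditional probability is written as `P_p(event ∩ condition)/P_p(condition)`. -/
theorem far_right_wall (p : ℝ) (hp : 0 < p) (hp1 : p < 1) (r Δ n : ℕ)
    (hr : 0 < r) (hΔ : 0 < Δ) (hn : 2 * r + 1 < n) :
    haveI : NeZero n := ⟨by omega⟩
    pr p {σ : ZMod n → Bool |
        ringFix n r σ 0 = true ∧ Δ ≤ Rwall n r σ ∧ σ 0 = false} /
      pr p {σ : ZMod n → Bool | σ 0 = false}
      ≤ (1 / (Δ : ℝ)) * ((1 - p)⁻¹ ^ r * (r * (1 - p) ^ r + 1 / (p * (1 - p)))) := by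
  haveI : NeZero n := ⟨by omega⟩
  classical
  set q : ℝ := 1 - p with hqdef
  have hq0 : (0:ℝ) < q := by rw [hqdef]; linarith
  have hq1 : q < 1 := by rw [hqdef]; linarith
  have hp0 : (0:ℝ) ≤ p := le_of_lt hp
  have hp1' : p ≤ 1 := le_of_lt hp1
  have hΔ0 : (0:ℝ) < (Δ:ℝ) := by exact_mod_cast hΔ
  have hqr0 : (0:ℝ) < (q⁻¹)^r := pow_pos (inv_pos.2 hq0) r
  set Ew : Set (ZMod n → Bool) := {σ | Δ ≤ Rwall n r σ ∧ σ 0 = false} with hEw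
  have hden : pr p {σ : ZMod n → Bool | σ 0 = false} = q := pr_sigma0 p hp hp1
  set Num : ℝ := pr p {σ : ZMod n → Bool | ringFix n r σ 0 = true ∧ Δ ≤ Rwall n r σ ∧ σ 0 = false} with hNum
  have hNumE : Num ≤ pr p Ew := by
    refine pr_mono hp0 hp1' ?_
    rintro σ ⟨_, h1, h2⟩
    exact ⟨h1, h2⟩
  have hNum0 : 0 ≤ Num := pr_nonneg hp0 hp1' _
  have hRHS0 : 0 ≤ (1 / (Δ : ℝ)) * ((1 - p)⁻¹ ^ r * (r * (1 - p) ^ r + 1 / (p * (1 - p)))) := by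
    have h1 : (0:ℝ) ≤ (r : ℝ) * (1-p)^r := by positivity
    have h2 : (0:ℝ) < p * (1-p) := mul_pos hp hq0
    have h3 : (0:ℝ) ≤ 1 / (p * (1-p)) := le_of_lt (by positivity)
    have h4 : (0:ℝ) ≤ (1-p)⁻¹ ^ r := by
      rw [← hqdef]
      exact le_of_lt hqr0
    positivity
  by_cases hcase : n < Δ
  · -- numerator event empty
    have hempty : Ew ⊆ (∅ : Set (ZMod n → Bool)) := by
      rintro σ ⟨hR, _⟩
      have := Rwall_le_n (r := r) (by omega : 0 < n) σ
      omega
    have h0 : pr p Ew ≤ 0 := by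
      have := pr_mono hp0 hp1' hempty
      rwa [pr_empty] at this
    have : Num = 0 := le_antisymm (le_trans hNumE h0) hNum0
    rw [this, hden, zero_div]
    exact hRHS0
  · push_neg at hcase  -- Δ ≤ n
    set L : ℕ := n - r - 2 with hLdef
    set S : ℝ := ∑ m ∈ Finset.range (L+1), uu n r p m with hSdef
    have hu0 : uu n r p 0 = q := uu_zero hp hp1
    have hunn : ∀ m, 0 ≤ uu n r p m := uu_nonneg hp hp1
    have huq : ∀ m, uu n r p m ≤ q := by
      intro m
      have := uu_le_q (n := n) (r := r) hp hp1 m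
      rwa [← hqdef] at this
    -- Δ * pr Ew ≤ Σ_{ℓ<Δ} uu (min ℓ L)
    have hkey1 : (Δ:ℝ) * pr p Ew ≤ ∑ ℓ ∈ Finset.range Δ, uu n r p (min ℓ L) := by
      have heach : ∀ ℓ ∈ Finset.range Δ, pr p Ew ≤ uu n r p (min ℓ L) := by
        intro ℓ hℓ
        have hℓΔ : min ℓ L < Δ := by
          have := Finset.mem_range.1 hℓ
          omega
        exact pr_mono hp0 hp1' (Ewall_subset hℓΔ)
      calc (Δ:ℝ) * pr p Ew = ∑ _ℓ ∈ Finset.range Δ, pr p Ew := by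
            rw [Finset.sum_const, Finset.card_range, nsmul_eq_mul]
        _ ≤ ∑ ℓ ∈ Finset.range Δ, uu n r p (min ℓ L) := Finset.sum_le_sum heach
    -- Σ_{ℓ<Δ} uu (min ℓ L) ≤ S + (r+1) q
    have hkey2 : (∑ ℓ ∈ Finset.range Δ, uu n r p (min ℓ L)) ≤ S + (r+1) * q := by
      have heach : ∀ ℓ ∈ Finset.range Δ,
          uu n r p (min ℓ L) ≤ (if ℓ ≤ L then uu n r p ℓ else q) := by
        intro ℓ _
        by_cases h : ℓ ≤ L
        · rw [if_pos h, min_eq_left h]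
        · rw [if_neg h, min_eq_right (by omega : L ≤ ℓ)]
          exact huq L
      refine le_trans (Finset.sum_le_sum heach) ?_
      rw [Finset.sum_ite]
      have hfirst : (∑ ℓ ∈ (Finset.range Δ).filter (fun ℓ => ℓ ≤ L), uu n r p ℓ) ≤ S := by
        rw [hSdef]
        refine Finset.sum_le_sum_of_subset_of_nonneg ?_ (fun i _ _ => hunn i)
        intro ℓ hℓ
        have := (Finset.mem_filter.1 hℓ).2
        exact Finset.mem_range.2 (by omega)
      have hsecond : (∑ _ℓ ∈ (Finset.range Δ).filter (fun ℓ => ¬ ℓ ≤ L), q) ≤ (r+1) * q := by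
        rw [Finset.sum_const, nsmul_eq_mul]
        have hset : (Finset.range Δ).filter (fun ℓ => ¬ ℓ ≤ L) = Finset.Ico (L+1) Δ := by
          ext ℓ
          simp only [Finset.mem_filter, Finset.mem_range, Finset.mem_Ico, not_le]
          omega
        rw [hset, Nat.card_Ico]
        have hcard : (Δ - (L+1) : ℕ) ≤ r + 1 := by omega
        have : ((Δ - (L+1) : ℕ) : ℝ) ≤ ((r:ℝ)+1) := by
          calc ((Δ - (L+1) : ℕ) : ℝ) ≤ ((r+1 : ℕ) : ℝ) := by exact_mod_cast hcard
            _ = (r:ℝ)+1 := by push_cast; ring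
        exact mul_le_mul_of_nonneg_right this (le_of_lt hq0)
      linarith
    -- S ≤ q⁻¹^r / p - (r+1) q
    have hkey3 : S ≤ (q⁻¹)^r / p - (r+1) * q := by
      have := sum_uu (n := n) hp hp1 hr hn
      rw [hSdef, hLdef]
      rw [show n - r - 2 + 1 = n - r - 1 by omega]
      rw [hqdef]
      exact this
    -- combine
    have hEwB : pr p Ew ≤ (q⁻¹)^r / p * (1 / (Δ:ℝ)) := by
      rw [mul_one_div, le_div_iff₀ hΔ0]
      calc pr p Ew * (Δ:ℝ) = (Δ:ℝ) * pr p Ew := by ring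
        _ ≤ S + (r+1) * q := le_trans hkey1 hkey2
        _ ≤ (q⁻¹)^r / p := by linarith
    rw [hden, div_le_iff₀ hq0]
    have hfinal : (q⁻¹)^r / p * (1 / (Δ:ℝ))
        ≤ (1 / (Δ : ℝ)) * ((1 - p)⁻¹ ^ r * (r * (1 - p) ^ r + 1 / (p * (1 - p)))) * q := by
      rw [← hqdef]
      have hexp : (1 / (Δ : ℝ)) * (q⁻¹ ^ r * ((r:ℝ) * q ^ r + 1 / (p * q))) * q
          = (1 / (Δ:ℝ)) * (q⁻¹^r * ((r:ℝ) * q^r * q)) + (q⁻¹)^r / p * (1 / (Δ:ℝ)) := by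
        field_simp
      rw [hexp]
      have hpos : 0 ≤ (1 / (Δ:ℝ)) * (q⁻¹^r * ((r:ℝ) * q^r * q)) := by positivity
      linarith
    exact le_trans (le_trans hNumE hEwB) hfinal
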